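/- Let L be the free Lie algebra over ℤ on generators X₁,…,X_m, and let L^{mult}_d denote the ℤ-submodule of its degree-d component spanned by Lie monomials in which each of X₁,…,X_d appears (for a fixed choice of d of the m generators, each appearing exactly once). Then L^{mult}_d is a free ℤ-module of rank (d−1)!, with basis the left-normed brackets [X_{σ(1)},[X_{σ(2)},[…,[X_{σ(d−1)}, X_d]…]]] where σ ranges over permutations of {1,…,d−1}. -/

import Mathlib

inductive IsLieMono {m : ℕ} : FreeLieAlgebra ℤ (Fin m) → Multiset (Fin m) → Prop
  | of (i : Fin m) : IsLieMono (FreeLieAlgebra.of ℤ i) {i}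
  | lie {x y : FreeLieAlgebra ℤ (Fin m)} {s t : Multiset (Fin m)} :
      IsLieMono x s → IsLieMono y t → IsLieMono ⁅x, y⁆ (s + t)

def lnb {L : Type*} [LieRing L] : List L → L
  | [] => 0
  | [a] => a
  | a :: l => ⁅a, lnb l⁆

section Aux
variable {m : ℕ}

theorem lnb_cons {L : Type*} [LieRing L] (a : L) (l : List L) (h : l ≠ []) :
    lnb (a :: l) = ⁅a, lnb l⁆ := by
  cases l with
  | nil => exact absurd rfl h
  | cons b t => rfl

noncomputable def LNB (z : Fin m) (l : List (Fin m)) : FreeLieAlgebra ℤ (Fin m) :=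
  lnb (l.map (FreeLieAlgebra.of ℤ) ++ [FreeLieAlgebra.of ℤ z])

theorem LNB_nil (z : Fin m) : LNB z [] = FreeLieAlgebra.of ℤ z := rfl

theorem LNB_cons (z a : Fin m) (l : List (Fin m)) :
    LNB z (a :: l) = ⁅FreeLieAlgebra.of ℤ a, LNB z l⁆ := by
  unfold LNB
  rw [List.map_cons, List.cons_append, lnb_cons]
  simp

noncomputable def SpanL (z : Fin m) (r : Multiset (Fin m)) :
    Submodule ℤ (FreeLieAlgebra ℤ (Fin m)) :=
  Submodule.span ℤ (LNB z '' {l : List (Fin m) | (l : Multiset (Fin m)) = r})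

theorem lemmaA (z : Fin m) {x : FreeLieAlgebra ℤ (Fin m)} {t : Multiset (Fin m)}
    (hx : IsLieMono x t) :
    ∀ (r : Multiset (Fin m)) (y : FreeLieAlgebra ℤ (Fin m)), y ∈ SpanL z r →
      ⁅x, y⁆ ∈ SpanL z (t + r) := by
  induction hx with
  | of i =>
    intro r y hy
    induction hy using Submodule.span_induction with
    | mem w hw =>
      obtain ⟨l, hl, rfl⟩ := hw
      rw [← LNB_cons]
      apply Submodule.subset_span
      exact ⟨i :: l, by simp only [Set.mem_setOf_eq] at hl ⊢; rw [← hl]; rfl, rfl⟩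
    | zero => simp
    | add a b _ _ ha hb => rw [lie_add]; exact add_mem ha hb
    | smul c a _ ha => rw [lie_smul]; exact Submodule.smul_mem _ _ ha
  | @lie u v su sv hu hv ihu ihv =>
    intro r y hy
    rw [lie_lie]
    apply sub_mem
    · have h1 := ihu (sv + r) _ (ihv r y hy)
      rwa [← add_assoc] at h1
    · have h1 := ihv (su + r) _ (ihu r y hy)
      rwa [← add_assoc, add_comm sv su] at h1

theorem lemmaB (z : Fin m) {x : FreeLieAlgebra ℤ (Fin m)} {t : Multiset (Fin m)}
    (hx : IsLieMono x t) (hz : z ∈ t) : x ∈ SpanL z (t.erase z) := by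
  induction hx with
  | of i =>
    rcases Multiset.mem_singleton.mp hz with rfl
    apply Submodule.subset_span
    exact ⟨[], by simp, rfl⟩
  | @lie u v su sv hu hv ihu ihv =>
    rcases Multiset.mem_add.mp hz with h | h
    · have h2 := lemmaA z hv _ _ (ihu h)
      rw [← lie_skew]
      apply neg_mem
      rw [Multiset.erase_add_left_pos _ h, add_comm (su.erase z) sv]
      exact h2
    · have h2 := lemmaA z hu _ _ (ihv h)
      rw [Multiset.erase_add_right_pos _ h]
      exact h2

theorem isLieMono_LNB (z : Fin m) (l : List (Fin m)) :
    IsLieMono (LNB z l) ((l : Multiset (Fin m)) + {z}) := by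
  induction l with
  | nil =>
    have h : ((([] : List (Fin m)) : Multiset (Fin m)) + {z}) = ({z} : Multiset (Fin m)) := by
      simp
    rw [LNB_nil, h]
    exact IsLieMono.of z
  | cons a l ih =>
    rw [LNB_cons]
    have h := IsLieMono.lie (IsLieMono.of a) ih
    have he : ({a} : Multiset (Fin m)) + ((l : Multiset (Fin m)) + {z})
        = ((a :: l : List (Fin m)) : Multiset (Fin m)) + {z} := by
      rw [← add_assoc]; rfl
    rwa [he] at h

attribute [local instance 100] LieRing.ofAssociativeRing

noncomputable def Fm : FreeLieAlgebra ℤ (Fin m) →ₗ⁅ℤ⁆ MonoidAlgebra ℤ (FreeMonoid (Fin m)) :=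
  FreeLieAlgebra.lift ℤ (fun i => MonoidAlgebra.single (FreeMonoid.of i) 1)

theorem Fm_of (i : Fin m) :
    Fm (FreeLieAlgebra.of ℤ i) = MonoidAlgebra.single (FreeMonoid.of i) (1:ℤ) :=
  FreeLieAlgebra.lift_of_apply _ _

theorem ofList_mul_eq {a : Fin m} {c : FreeMonoid (Fin m)} {w : List (Fin m)} :
    FreeMonoid.of a * c = FreeMonoid.ofList (a :: w) ↔ c = FreeMonoid.ofList w := by
  constructor
  · intro h
    have h2 : (a :: (FreeMonoid.toList c)) = a :: w := by
      simpa [FreeMonoid.toList_mul] using congrArg FreeMonoid.toList h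
    simp at h2
    exact FreeMonoid.toList.injective (by simpa using h2)
  · rintro rfl
    apply FreeMonoid.toList.injective
    simp [FreeMonoid.toList_mul]
    rfl

theorem not_of_mul {a b : Fin m} (hab : b ≠ a) {w : List (Fin m)} :
    ¬ ∃ d, FreeMonoid.ofList (b :: w) = FreeMonoid.of a * d := by
  rintro ⟨d, hd⟩
  have h2 : (b :: w) = a :: FreeMonoid.toList d := by
    simpa [FreeMonoid.toList_mul] using congrArg FreeMonoid.toList hd
  exact hab (List.head_eq_of_cons_eq h2 : b = a)

theorem not_of_mul_nil {a : Fin m} {z : Fin m} (hza : z ≠ a) :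
    ¬ ∃ d, FreeMonoid.ofList ([z]) = FreeMonoid.of a * d := by
  rintro ⟨d, hd⟩
  have h2 : [z] = a :: FreeMonoid.toList d := by
    simpa [FreeMonoid.toList_mul] using congrArg FreeMonoid.toList hd
  exact hza (List.head_eq_of_cons_eq h2)

theorem not_mul_of {a z : Fin m} (hza : z ≠ a) (w : List (Fin m)) :
    ¬ ∃ d, FreeMonoid.ofList (w ++ [z]) = d * FreeMonoid.of a := by
  rintro ⟨d, hd⟩
  have h2 : w ++ [z] = FreeMonoid.toList d ++ [a] := by
    simpa [FreeMonoid.toList_mul] using congrArg FreeMonoid.toList hd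
  have := List.append_inj_right' h2 rfl
  simp at this
  exact hza this

theorem coeff_Fm_LNB (z : Fin m) (l : List (Fin m)) (hz : z ∉ l) (w : List (Fin m)) :
    (Fm (LNB z l)).coeff (FreeMonoid.ofList (w ++ [z])) = if w = l then 1 else 0 := by
  classical
  induction l generalizing w with
  | nil =>
    rw [LNB_nil, Fm_of, MonoidAlgebra.coeff_single, Finsupp.single_apply]
    by_cases hw : w = []
    · subst hw; simp
    · rw [if_neg hw, if_neg]
      intro h
      apply hw
      have h2 : ([z] : List (Fin m)) = w ++ [z] := by
        simpa using congrArg FreeMonoid.toList h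
      have h3 : w ++ [z] = [] ++ [z] := by simpa using h2.symm
      simpa using List.append_inj_left' h3 rfl
  | cons a l ih =>
    have haz : z ≠ a := fun h => hz (h ▸ List.mem_cons_self (a := a) (l := l))
    have hzl : z ∉ l := fun h => hz (List.mem_cons_of_mem a h)
    rw [LNB_cons, LieHom.map_lie, Fm_of, Ring.lie_def]
    rw [MonoidAlgebra.coeff_sub, Finsupp.sub_apply]
    rw [MonoidAlgebra.mul_single_apply_of_not_exists_mul _ _ (not_mul_of haz w), sub_zero]
    cases w with
    | nil =>
      rw [show FreeMonoid.ofList ([] ++ [z]) = FreeMonoid.ofList [z] from rfl]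
      rw [MonoidAlgebra.single_mul_apply_of_not_exists_mul _ _ (not_of_mul_nil haz)]
      rw [if_neg (by simp)]
    | cons b w' =>
      by_cases hba : b = a
      · subst hba
        rw [show FreeMonoid.ofList ((b :: w') ++ [z]) = FreeMonoid.ofList (b :: (w' ++ [z]))
          from rfl]
        rw [MonoidAlgebra.single_mul_apply_aux _ (fun c _ => ofList_mul_eq), one_mul, ih hzl w']
        simp
      · rw [show FreeMonoid.ofList ((b :: w') ++ [z]) = FreeMonoid.ofList (b :: (w' ++ [z]))
          from rfl]
        rw [MonoidAlgebra.single_mul_apply_of_not_exists_mul _ _ (not_of_mul hba)]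
        rw [if_neg (by simp [hba])]

theorem linIndep_LNB (z : Fin m) {n : ℕ} (emb : Fin n → Fin m) (hinj : Function.Injective emb)
    (hz : ∀ i, emb i ≠ z) :
    LinearIndependent ℤ (fun σ : Equiv.Perm (Fin n) =>
      LNB z (List.ofFn (fun i => emb (σ i)))) := by
  classical
  apply LinearIndependent.of_comp (Fm (m := m)).toLinearMap
  rw [Fintype.linearIndependent_iff]
  intro g hg τ
  have h := congrArg (fun f : MonoidAlgebra ℤ (FreeMonoid (Fin m)) =>
      f.coeff (FreeMonoid.ofList (List.ofFn (fun i => emb (τ i)) ++ [z]))) hg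
  simp only [MonoidAlgebra.coeff_zero, Finsupp.coe_zero, Pi.zero_apply] at h
  rw [MonoidAlgebra.coeff_sum, Finsupp.finset_sum_apply] at h
  have hco : ∀ σ : Equiv.Perm (Fin n),
      (g σ • (Fm.toLinearMap ∘ fun σ => LNB z (List.ofFn fun i => emb (σ i))) σ).coeff
        (FreeMonoid.ofList (List.ofFn (fun i => emb (τ i)) ++ [z]))
      = if σ = τ then g σ else 0 := by
    intro σ
    rw [MonoidAlgebra.coeff_smul, Finsupp.smul_apply]
    have hznot : z ∉ List.ofFn (fun i => emb (σ i)) := by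
      simp only [List.mem_ofFn]
      rintro ⟨i, hi⟩
      exact hz (σ i) hi
    rw [Function.comp_apply, LieHom.coe_toLinearMap,
      coeff_Fm_LNB z _ hznot (List.ofFn fun i => emb (τ i))]
    have heq : (List.ofFn (fun i => emb (τ i)) = List.ofFn fun i => emb (σ i)) ↔ σ = τ := by
      rw [List.ofFn_inj]
      constructor
      · intro hf
        ext i
        exact congrArg Fin.val (hinj (congrFun hf i)).symm
      · rintro rfl; rfl
    rw [if_congr heq rfl rfl]
    split_ifs <;> simp
  rw [Finset.sum_congr rfl (fun σ _ => hco σ)] at h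
  rw [Finset.sum_ite_eq' Finset.univ τ g] at h
  simpa using h

end Aux

theorem stmt1 (m d : ℕ) (hd : 0 < d) (hdm : d ≤ m) :
    ∃ b : Module.Basis (Equiv.Perm (Fin (d - 1))) ℤ
      (Submodule.span ℤ {x : FreeLieAlgebra ℤ (Fin m) |
        IsLieMono x (((Finset.univ : Finset (Fin d)).val.map (Fin.castLE hdm)))}),
      ∀ σ : Equiv.Perm (Fin (d - 1)),
        (b σ : FreeLieAlgebra ℤ (Fin m)) =
          lnb ((List.ofFn fun i : Fin (d - 1) =>
              FreeLieAlgebra.of ℤ (⟨(σ i).1, by have := (σ i).2; omega⟩ : Fin m))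
            ++ [FreeLieAlgebra.of ℤ (⟨d - 1, by omega⟩ : Fin m)]) := by
  classical
  set z : Fin m := ⟨d - 1, by omega⟩ with hz_def
  set emb : Fin (d - 1) → Fin m := fun i => ⟨i.1, by have := i.2; omega⟩ with hemb_def
  have hembinj : Function.Injective emb := by
    intro i j hij
    have h0 := congrArg Fin.val hij
    exact Fin.ext h0
  have hembz : ∀ i, emb i ≠ z := by
    intro i h
    have := congrArg Fin.val h
    simp [hemb_def, hz_def] at this
    omega
  set v : Equiv.Perm (Fin (d - 1)) → FreeLieAlgebra ℤ (Fin m) :=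
    fun σ => LNB z (List.ofFn fun i => emb (σ i)) with hv_def
  have hli : LinearIndependent ℤ v := linIndep_LNB z emb hembinj hembz
  set s : Multiset (Fin m) :=
    (Finset.univ : Finset (Fin d)).val.map (Fin.castLE hdm) with hs_def
  have hs_nodup : s.Nodup := Multiset.Nodup.map (Fin.castLE_injective hdm) Finset.univ.nodup
  have hs_card : Multiset.card s = d := by simp [hs_def]
  have hmem_s : ∀ a : Fin m, a ∈ s ↔ a.1 < d := by
    intro a
    constructor
    · intro ha
      obtain ⟨j, _, rfl⟩ := Multiset.mem_map.mp ha
      exact j.2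
    · intro ha
      exact Multiset.mem_map.mpr ⟨⟨a.1, ha⟩, Finset.mem_univ_val _, Fin.ext rfl⟩
  have hzs : z ∈ s := (hmem_s z).mpr (show d - 1 < d by omega)
  -- each v σ is a monomial with multiset s
  have hvmono : ∀ σ, IsLieMono (v σ) s := by
    intro σ
    have h := isLieMono_LNB z (List.ofFn fun i => emb (σ i))
    have hms : ((List.ofFn fun i => emb (σ i) : List (Fin m)) : Multiset (Fin m)) + {z} = s := by
      apply Multiset.eq_of_le_of_card_le
      · rw [Multiset.le_iff_subset]
        · intro a ha
          rcases Multiset.mem_add.mp ha with h1 | h1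
          · rw [Multiset.mem_coe, List.mem_ofFn] at h1
            obtain ⟨i, rfl⟩ := h1
            exact (hmem_s _).mpr (show ((σ i : Fin (d-1)) : ℕ) < d by
              have := (σ i).2; omega)
          · rw [Multiset.mem_singleton.mp h1]
            exact hzs
        · rw [show ((List.ofFn fun i => emb (σ i) : List (Fin m)) : Multiset (Fin m)) + {z}
              = ((List.ofFn (fun i => emb (σ i)) ++ [z] : List (Fin m)) : Multiset (Fin m))
              from rfl]
          rw [Multiset.coe_nodup]
          rw [List.nodup_append]
          refine ⟨List.nodup_ofFn.mpr (hembinj.comp σ.injective), List.nodup_singleton z, ?_⟩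
          intro a ha b hb hab
          rw [List.mem_singleton] at hb
          subst hb
          rw [List.mem_ofFn] at ha
          obtain ⟨i, hi⟩ := ha
          exact hembz (σ i) (hi.trans hab)
      · rw [hs_card]
        simp
        omega
    rwa [hms] at h
  -- span S = span (range v)
  have hSspan : Submodule.span ℤ {x : FreeLieAlgebra ℤ (Fin m) | IsLieMono x s}
      = Submodule.span ℤ (Set.range v) := by
    apply le_antisymm
    · rw [Submodule.span_le]
      intro x hx
      have hxB := lemmaB z hx hzs
      have hle : SpanL z (s.erase z) ≤ Submodule.span ℤ (Set.range v) := by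
        rw [SpanL, Submodule.span_le]
        rintro _ ⟨l, hl, rfl⟩
        simp only [Set.mem_setOf_eq] at hl
        -- construct the permutation
        have hlnodup : l.Nodup := by
          rw [← Multiset.coe_nodup, hl]
          exact hs_nodup.erase z
        have hllen : l.length = d - 1 := by
          have := congrArg Multiset.card hl
          rw [Multiset.coe_card, Multiset.card_erase_of_mem hzs, hs_card] at this
          rw [this]
          rfl
        have hmeml : ∀ a : Fin m, a ∈ l → a.1 < d - 1 := by
          intro a ha
          rw [← Multiset.mem_coe, hl, Multiset.Nodup.mem_erase_iff hs_nodup] at ha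
          obtain ⟨hne, hmem⟩ := ha
          have h1 := (hmem_s a).mp hmem
          have h2 : a.1 ≠ d - 1 := fun h => hne (Fin.ext (by rw [h]))
          omega
        set e : Fin (d - 1) → Fin (d - 1) := fun i =>
          ⟨(l.get (Fin.cast hllen.symm i)).1,
            hmeml _ (l.get_mem (Fin.cast hllen.symm i))⟩ with he_def
        have heinj : Function.Injective e := by
          intro i j hij
          have h0 := congrArg Fin.val hij
          have h1 : l.get (Fin.cast hllen.symm i) = l.get (Fin.cast hllen.symm j) :=
            Fin.ext h0
          have h2 := (List.Nodup.get_inj_iff hlnodup).mp h1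
          have h3 := congrArg Fin.val h2
          exact Fin.ext h3
        have hebij : Function.Bijective e := (Finite.injective_iff_bijective).mp heinj
        set σ : Equiv.Perm (Fin (d - 1)) := Equiv.ofBijective e hebij with hσ_def
        have hlσ : l = List.ofFn fun i => emb (σ i) := by
          apply List.ext_get
          · simp [hllen]
          · intro n h1 h2
            rw [List.get_ofFn]
            apply Fin.ext
            simp [hσ_def, Equiv.ofBijective, he_def, hemb_def]
        apply Submodule.subset_span
        exact ⟨σ, by show LNB z (List.ofFn fun i => emb (σ i)) = LNB z l; rw [← hlσ]⟩
      exact hle hxB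
    · rw [Submodule.span_le]
      rintro _ ⟨σ, rfl⟩
      exact Submodule.subset_span (hvmono σ)
  -- build the basis
  have hb : Submodule.span ℤ (Set.range v)
      = Submodule.span ℤ {x : FreeLieAlgebra ℤ (Fin m) | IsLieMono x s} := hSspan.symm
  refine ⟨(Module.Basis.span hli).map (LinearEquiv.ofEq _ _ hb), ?_⟩
  intro σ
  rw [Module.Basis.map_apply]
  have h1 : ((LinearEquiv.ofEq _ _ hb) (Module.Basis.span hli σ) : FreeLieAlgebra ℤ (Fin m))
      = ((Module.Basis.span hli σ : Submodule.span ℤ (Set.range v)) : FreeLieAlgebra ℤ (Fin m)) := rfl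
  rw [h1, Module.Basis.span_apply]
  rw [hv_def]
  show LNB z (List.ofFn fun i => emb (σ i)) = _
  rw [LNB, List.map_ofFn]
  rfl
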